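/- Let X₁, …, Xₙ be i.i.d. random variables, each exponentially distributed with mean μ > 0 (i.e., exponential with rate 1/μ). Define the estimator μ̂ = (∑_{i=1}^n Xᵢ)/n. Then for every ε ∈ (0,1), the probability Pr{ |μ̂ − μ| / μ < ε } is at least g(n, n(1+ε)/(1+2ε)) − g(n, n(1+ε)), where g(m, x) = e^{−x} ∑_{i=0}^{m−1} xⁱ/i!. -/

import Mathlib

open MeasureTheory ProbabilityTheory

/-- `g m x = e^{-x} ∑_{i=0}^{m-1} x^i / i!`. -/
noncomputable def g (m : ℕ) (x : ℝ) : ℝ :=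
  Real.exp (-x) * ∑ i ∈ Finset.range m, x ^ i / (Nat.factorial i)

open Real Set
open scoped ENNReal

lemma conv_withDensity (f h : ℝ → ℝ≥0∞) (hf : Measurable f) (hh : Measurable h) :
    Measure.conv (volume.withDensity f) (volume.withDensity h)
      = volume.withDensity (fun t => ∫⁻ s, f s * h (t - s)) := by
  ext A hA
  rw [Measure.conv, Measure.map_apply (by fun_prop) hA,
    Measure.prod_apply (hA.preimage (by fun_prop)), withDensity_apply _ hA]
  have hind : Measurable (A.indicator (1 : ℝ → ℝ≥0∞)) := measurable_one.indicator hA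
  have step1 : ∀ x : ℝ, (volume.withDensity h) (Prod.mk x ⁻¹' ((fun p : ℝ × ℝ => p.1 + p.2) ⁻¹' A))
      = ∫⁻ t, A.indicator 1 t * h (t - x) := by
    intro x
    have hBset : MeasurableSet {y : ℝ | x + y ∈ A} := hA.preimage (by fun_prop)
    have he : Prod.mk x ⁻¹' ((fun p : ℝ × ℝ => p.1 + p.2) ⁻¹' A) = {y : ℝ | x + y ∈ A} := rfl
    rw [he, withDensity_apply _ hBset, ← lintegral_indicator hBset]
    have he2 : ∀ y : ℝ, {y : ℝ | x + y ∈ A}.indicator h y = A.indicator 1 (x + y) * h y := by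
      intro y
      by_cases hy : x + y ∈ A <;> simp [Set.indicator, hy]
    simp_rw [he2]
    calc ∫⁻ y, A.indicator 1 (x + y) * h y
        = ∫⁻ y, (fun t => A.indicator 1 t * h (t - x)) (y + x) := by
          congr 1; funext y; rw [add_comm x y]; simp
      _ = ∫⁻ t, A.indicator 1 t * h (t - x) :=
          lintegral_add_right_eq_self (fun t => A.indicator 1 t * h (t - x)) x
  simp_rw [step1]
  have hmeas2 : Measurable (fun p : ℝ × ℝ => A.indicator 1 p.2 * h (p.2 - p.1)) := by fun_prop
  rw [lintegral_withDensity_eq_lintegral_mul _ hf hmeas2.lintegral_prod_right']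
  simp only [Pi.mul_apply]
  calc ∫⁻ x, f x * ∫⁻ t, A.indicator 1 t * h (t - x)
      = ∫⁻ x, ∫⁻ t, f x * (A.indicator 1 t * h (t - x)) := by
        congr 1; funext x
        rw [lintegral_const_mul _ (by fun_prop : Measurable fun t => A.indicator 1 t * h (t - x))]
    _ = ∫⁻ t, ∫⁻ x, f x * (A.indicator 1 t * h (t - x)) := by
        apply lintegral_lintegral_swap
        fun_prop
    _ = ∫⁻ t, A.indicator 1 t * ∫⁻ x, f x * h (t - x) := by
        congr 1; funext t
        rw [← lintegral_const_mul _ (by fun_prop : Measurable fun x => f x * h (t - x))]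
        congr 1; funext x; ring
    _ = ∫⁻ t in A, ∫⁻ s, f s * h (t - s) := by
        rw [← lintegral_indicator hA]
        congr 1; funext t
        by_cases ht : t ∈ A <;> simp [Set.indicator, ht]

lemma gamma_cast_fact (n : ℕ) (hn : 0 < n) : Real.Gamma n = (n - 1).factorial := by
  have h : (n : ℝ) = ((n - 1 : ℕ) : ℝ) + 1 := by
    rw [Nat.cast_pred hn]; ring
  rw [h, Real.Gamma_nat_eq_factorial]

lemma gamma_pdf_conv (n : ℕ) (hn : 0 < n) {r : ℝ} (hr : 0 < r) (t : ℝ) :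
    ∫⁻ s, gammaPDF n r s * gammaPDF 1 r (t - s) = gammaPDF (n + 1) r t := by
  rcases lt_or_ge t 0 with ht | ht
  · rw [gammaPDF_of_neg (by exact_mod_cast ht)]
    have : ∀ s : ℝ, gammaPDF (n : ℝ) r s * gammaPDF 1 r (t - s) = 0 := by
      intro s
      rcases lt_or_ge s 0 with hs | hs
      · rw [gammaPDF_of_neg hs, zero_mul]
      · rw [gammaPDF_of_neg (by linarith : t - s < 0), mul_zero]
    simp_rw [this, lintegral_zero]
  · set c : ℝ := r ^ (n + 1) * Real.exp (-(r * t)) / (n - 1).factorial with hc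
    have hc0 : 0 ≤ c := by positivity
    have hpow : ∀ s : ℝ, 0 ≤ s → s ^ ((n : ℝ) - 1) = s ^ (n - 1 : ℕ) := by
      intro s hs
      rw [← Nat.cast_pred hn, Real.rpow_natCast]
    have key : ∀ s : ℝ, gammaPDF (n : ℝ) r s * gammaPDF 1 r (t - s)
        = (Icc 0 t).indicator (fun s => ENNReal.ofReal (c * s ^ (n - 1 : ℕ))) s := by
      intro s
      rcases lt_or_ge s 0 with hs | hs
      · rw [gammaPDF_of_neg hs, zero_mul, indicator_of_notMem (by simp [hs.not_ge])]
      rcases lt_or_ge t s with hts | hts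
      · rw [gammaPDF_of_neg (by linarith : t - s < 0), mul_zero,
          indicator_of_notMem (by simp [hts.not_ge])]
      · rw [indicator_of_mem (by exact ⟨hs, hts⟩),
          gammaPDF_of_nonneg hs, gammaPDF_of_nonneg (by linarith : (0:ℝ) ≤ t - s),
          ← ENNReal.ofReal_mul (by positivity)]
        congr 1
        have hexp : Real.exp (-(r * s)) * Real.exp (-(r * (t - s))) = Real.exp (-(r * t)) := by
          rw [← Real.exp_add]; ring_nf
        rw [hpow s hs, gamma_cast_fact n hn]
        simp only [Real.rpow_one, Real.Gamma_one, sub_self, Real.rpow_zero, mul_one, div_one]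
        rw [Real.rpow_natCast, hc, ← hexp]
        ring
    simp_rw [key]
    rw [lintegral_indicator measurableSet_Icc]
    rw [← ofReal_integral_eq_lintegral_ofReal]
    · rw [gammaPDF_of_nonneg ht]
      congr 1
      rw [integral_Icc_eq_integral_Ioc, ← intervalIntegral.integral_of_le ht,
        intervalIntegral.integral_const_mul, integral_pow]
      have hn1 : (n - 1 : ℕ) + 1 = n := Nat.succ_pred_eq_of_pos hn
      rw [hn1]
      have hΓ : Real.Gamma ((n : ℝ) + 1) = n.factorial := by
        exact_mod_cast Real.Gamma_nat_eq_factorial n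
      have hpow2 : t ^ ((n : ℝ) + 1 - 1) = t ^ n := by
        rw [add_sub_cancel_right, Real.rpow_natCast]
      have hrpow : r ^ ((n : ℝ) + 1) = r ^ (n + 1 : ℕ) := by
        rw [← Real.rpow_natCast r (n+1)]; push_cast; ring_nf
      rw [hΓ, hpow2, hrpow, hc]
      have hfact : (n.factorial : ℝ) = n * (n - 1).factorial := by
        have h := Nat.succ_pred_eq_of_pos hn
        calc (n.factorial : ℝ) = (((n - 1) + 1).factorial : ℝ) := by rw [hn1]
          _ = ((((n - 1) + 1) * (n - 1).factorial : ℕ) : ℝ) := by rw [Nat.factorial_succ]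
          _ = (n : ℝ) * (n - 1).factorial := by
              push_cast
              rw [Nat.cast_pred hn]; ring
      rw [hfact]
      have h1 : ((n-1).factorial : ℝ) ≠ 0 := by positivity
      have h2 : (n : ℝ) ≠ 0 := by positivity
      field_simp
      rw [zero_pow hn.ne', Nat.cast_pred hn]; ring
    · exact Continuous.integrableOn_Icc (by continuity)
    · refine (ae_restrict_iff' measurableSet_Icc).mpr (ae_of_all _ fun s hs => ?_)
      have := hs.1
      positivity

lemma gammaMeasure_conv (n : ℕ) (hn : 0 < n) {r : ℝ} (hr : 0 < r) :
    Measure.conv (gammaMeasure n r) (gammaMeasure 1 r) = gammaMeasure ((n : ℝ) + 1) r := by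
  have hm : ∀ a : ℝ, Measurable (gammaPDF a r) := fun a =>
    (measurable_gammaPDFReal a r).ennreal_ofReal
  rw [gammaMeasure, gammaMeasure, gammaMeasure, conv_withDensity _ _ (hm _) (hm _)]
  congr 1
  funext t
  exact gamma_pdf_conv n hn hr t

lemma map_sum_gamma {Ω : Type*} [MeasureSpace Ω] [IsProbabilityMeasure (ℙ : Measure Ω)]
    {ι : Type*} (X : ι → Ω → ℝ) (hmeas : ∀ i, Measurable (X i))
    (hindep : iIndepFun X ℙ)
    {r : ℝ} (hr : 0 < r) (hdist : ∀ i, Measure.map (X i) ℙ = gammaMeasure 1 r)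
    (s : Finset ι) (hs : s.Nonempty) :
    Measure.map (fun ω => ∑ i ∈ s, X i ω) ℙ = gammaMeasure s.card r := by
  classical
  induction s using Finset.induction_on with
  | empty => exact absurd hs (by simp)
  | @insert i s hi ih =>
    rcases s.eq_empty_or_nonempty with rfl | hs'
    · simpa using hdist i
    · have hScard : 0 < s.card := Finset.card_pos.mpr hs'
      have hSmeas : Measurable (fun ω => ∑ j ∈ s, X j ω) := by
        exact Finset.measurable_sum s (fun j _ => hmeas j)
      have hS : IndepFun (∑ j ∈ s, X j) (X i) ℙ :=
        hindep.indepFun_finsetSum_of_notMem hmeas hi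
      have hSeq : (∑ j ∈ s, X j) = fun ω => ∑ j ∈ s, X j ω := by
        funext ω; simp
      rw [hSeq] at hS
      have hpair : Measure.map (fun ω => (X i ω, ∑ j ∈ s, X j ω)) ℙ
          = (Measure.map (X i) ℙ).prod (Measure.map (fun ω => ∑ j ∈ s, X j ω) ℙ) :=
        (indepFun_iff_map_prod_eq_prod_map_map (hmeas i).aemeasurable
          hSmeas.aemeasurable).mp hS.symm
      have hsum : (fun ω => ∑ j ∈ insert i s, X j ω)
          = (fun p : ℝ × ℝ => p.1 + p.2) ∘ (fun ω => (X i ω, ∑ j ∈ s, X j ω)) := by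
        funext ω
        simp [Finset.sum_insert hi]
      rw [hsum, ← Measure.map_map (by fun_prop) (by fun_prop), hpair]
      rw [hdist i, ih hs']
      haveI := isProbabilityMeasure_gammaMeasure (by exact_mod_cast hScard : (0:ℝ) < (s.card : ℝ)) hr
      haveI := isProbabilityMeasure_gammaMeasure (zero_lt_one) hr
      have : Measure.map (fun p : ℝ × ℝ => p.1 + p.2)
          ((gammaMeasure 1 r).prod (gammaMeasure s.card r))
          = Measure.conv (gammaMeasure 1 r) (gammaMeasure s.card r) := rfl
      rw [this, Measure.conv_comm, gammaMeasure_conv s.card hScard hr,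
        Finset.card_insert_of_notMem hi]
      push_cast
      ring_nf

lemma hasDerivAt_g (n : ℕ) (hn : 0 < n) (y : ℝ) :
    HasDerivAt (g n) (-(Real.exp (-y) * y ^ (n - 1) / (n - 1).factorial)) y := by
  have hp : HasDerivAt (fun y : ℝ => ∑ i ∈ Finset.range n, y ^ i / (Nat.factorial i : ℝ))
      (∑ i ∈ Finset.range n, (i : ℝ) * y ^ (i - 1) / (Nat.factorial i : ℝ)) y :=
    HasDerivAt.fun_sum fun i _ => (hasDerivAt_pow i y).div_const _
  have hsum : ∑ i ∈ Finset.range n, (i : ℝ) * y ^ (i - 1) / (Nat.factorial i : ℝ)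
      = ∑ i ∈ Finset.range (n - 1), y ^ i / (Nat.factorial i : ℝ) := by
    conv_lhs => rw [← Nat.succ_pred_eq_of_pos hn]
    rw [Finset.sum_range_succ']
    simp only [Nat.cast_zero, zero_mul, Nat.factorial_zero, Nat.cast_one, zero_div, add_zero]
    refine Finset.sum_congr rfl fun i _ => ?_
    rw [Nat.factorial_succ]
    have h1 : ((i : ℝ) + 1) ≠ 0 := by positivity
    push_cast
    rw [mul_div_mul_left _ _ h1]
  have hexp : HasDerivAt (fun y : ℝ => Real.exp (-y)) (-Real.exp (-y)) y := by
    simpa using ((hasDerivAt_neg y).exp)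
  have h := hexp.mul hp
  rw [hsum] at h
  have hr : -Real.exp (-y) * (∑ i ∈ Finset.range n, y ^ i / (Nat.factorial i : ℝ))
      + Real.exp (-y) * ∑ i ∈ Finset.range (n - 1), y ^ i / (Nat.factorial i : ℝ)
      = -(Real.exp (-y) * y ^ (n - 1) / (n - 1).factorial) := by
    have hs : ∑ i ∈ Finset.range n, y ^ i / (Nat.factorial i : ℝ)
        = (∑ i ∈ Finset.range (n - 1), y ^ i / (Nat.factorial i : ℝ))
          + y ^ (n - 1) / ((n - 1).factorial : ℝ) := by
      conv_lhs => rw [← Nat.succ_pred_eq_of_pos hn]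
      rw [Finset.sum_range_succ]
      simp [Nat.pred_eq_sub_one]
    rw [hs]; ring
  rw [← hr]
  exact h

lemma gammaPDFReal_eq (n : ℕ) (hn : 0 < n) {r : ℝ} (hr : 0 < r) {x : ℝ} (hx : 0 ≤ x) :
    gammaPDFReal n r x = r * Real.exp (-(r * x)) * (r * x) ^ (n - 1) / (n - 1).factorial := by
  rw [gammaPDFReal, if_pos hx]
  have e1 : x ^ ((n : ℝ) - 1) = x ^ (n - 1 : ℕ) := by
    rw [show ((n : ℝ) - 1) = ((n - 1 : ℕ) : ℝ) from (Nat.cast_pred hn).symm, Real.rpow_natCast]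
  have e2 : r ^ (n : ℝ) = r ^ (n : ℕ) := Real.rpow_natCast r n
  have e3 : Real.Gamma (n : ℝ) = ((n - 1).factorial : ℝ) := by
    rw [show (n : ℝ) = ((n - 1 : ℕ) : ℝ) + 1 from by rw [Nat.cast_pred hn]; ring,
      Real.Gamma_nat_eq_factorial]
  have e4 : r ^ (n : ℕ) = r * r ^ (n - 1 : ℕ) := by
    conv_lhs => rw [← Nat.succ_pred_eq_of_pos hn]
    rw [pow_succ, Nat.pred_eq_sub_one]
    ring
  rw [e1, e2, e3, mul_pow, e4]
  ring

lemma integral_gammaPDFReal (n : ℕ) (hn : 0 < n) {r : ℝ} (hr : 0 < r) {a b : ℝ}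
    (ha : 0 < a) (hab : a ≤ b) :
    ∫ x in a..b, gammaPDFReal n r x = g n (r * a) - g n (r * b) := by
  have huIcc : Set.uIcc a b = Set.Icc a b := Set.uIcc_of_le hab
  have hderiv : ∀ x ∈ Set.uIcc a b,
      HasDerivAt (fun x => -g n (r * x)) (gammaPDFReal n r x) x := by
    intro x hx
    rw [huIcc] at hx
    have hx0 : 0 < x := lt_of_lt_of_le ha hx.1
    have h1 : HasDerivAt (fun x : ℝ => g n (r * x))
        (-(Real.exp (-(r * x)) * (r * x) ^ (n - 1) / (n - 1).factorial) * r) x :=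
      (hasDerivAt_g n hn (r * x)).comp x (by simpa using (hasDerivAt_id x).const_mul r)
    have : HasDerivAt (fun x => -g n (r * x)) _ x := h1.neg
    convert this using 1
    rw [gammaPDFReal_eq n hn hr hx0.le]
    ring
  have hcont : ContinuousOn (gammaPDFReal n r) (Set.uIcc a b) := by
    apply ContinuousOn.congr (f := fun x => r * Real.exp (-(r * x)) * (r * x) ^ (n - 1)
      / (n - 1).factorial) (by fun_prop)
    intro x hx
    rw [huIcc] at hx
    exact gammaPDFReal_eq n hn hr (le_trans ha.le hx.1)
  have hint : IntervalIntegrable (gammaPDFReal n r) volume a b :=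
    hcont.intervalIntegrable
  have := intervalIntegral.integral_eq_sub_of_hasDerivAt hderiv hint
  rw [this]
  ring

lemma gammaMeasure_Ioo (n : ℕ) (hn : 0 < n) {r : ℝ} (hr : 0 < r) {a b : ℝ}
    (ha : 0 < a) (hab : a ≤ b) :
    gammaMeasure n r (Set.Ioo a b) = ENNReal.ofReal (g n (r * a) - g n (r * b)) := by
  rw [gammaMeasure, withDensity_apply _ measurableSet_Ioo]
  have hn' : (0 : ℝ) < n := by exact_mod_cast hn
  have hIcc : IntegrableOn (gammaPDFReal n r) (Set.Icc a b) := by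
    apply ContinuousOn.integrableOn_Icc
    apply ContinuousOn.congr (f := fun x => r * Real.exp (-(r * x)) * (r * x) ^ (n - 1)
      / (n - 1).factorial) (by fun_prop)
    intro x hx
    exact gammaPDFReal_eq n hn hr (le_trans ha.le hx.1)
  have : ∫⁻ x in Set.Ioo a b, gammaPDF n r x
      = ENNReal.ofReal (∫ x in Set.Ioo a b, gammaPDFReal n r x) := by
    simp only [gammaPDF]
    rw [← ofReal_integral_eq_lintegral_ofReal
      (hIcc.mono_set Set.Ioo_subset_Icc_self)
      (ae_of_all _ fun x => gammaPDFReal_nonneg hn' hr x)]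
  rw [this, ← integral_Ioc_eq_integral_Ioo, ← intervalIntegral.integral_of_le hab,
    integral_gammaPDFReal n hn hr ha hab]

/-- If `X₁, …, Xₙ` are i.i.d. exponential with mean `μ > 0` (rate `1/μ`) and
`μ̂ = (∑ Xᵢ)/n`, then for every `ε ∈ (0,1)`,
`Pr{|μ̂ - μ|/μ < ε} ≥ g(n, n(1+ε)/(1+2ε)) - g(n, n(1+ε))`. -/
theorem service_time_estimate_prob_ge
    {Ω : Type*} [MeasureSpace Ω] [IsProbabilityMeasure (ℙ : Measure Ω)]
    (n : ℕ) (hn : 0 < n) (μ : ℝ) (hμ : 0 < μ)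
    (X : Fin n → Ω → ℝ) (hmeas : ∀ i, Measurable (X i))
    (hindep : iIndepFun X ℙ)
    (hdist : ∀ i, Measure.map (X i) ℙ = expMeasure (1 / μ))
    (ε : ℝ) (hε : ε ∈ Set.Ioo (0 : ℝ) 1) :
    (ℙ {ω | |(∑ i, X i ω) / n - μ| / μ < ε}).toReal
      ≥ g n ((n : ℝ) * (1 + ε) / (1 + 2 * ε)) - g n ((n : ℝ) * (1 + ε)) := by
  obtain ⟨hε0, hε1⟩ := hε
  have hn' : (0 : ℝ) < n := by exact_mod_cast hn
  set r : ℝ := 1 / μ with hrdef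
  have hr : 0 < r := by positivity
  set a : ℝ := n * μ * (1 + ε) / (1 + 2 * ε) with hadef
  set b : ℝ := n * μ * (1 + ε) with hbdef
  have ha : 0 < a := by positivity
  have hab : a ≤ b := by
    rw [hadef, hbdef, div_le_iff₀ (by linarith)]
    nlinarith [mul_nonneg (mul_nonneg (mul_nonneg hn'.le hμ.le)
      (by linarith : (0:ℝ) ≤ 1 + ε)) (by linarith : (0:ℝ) ≤ 2 * ε)]
  -- distribution of the sum
  have hmap : Measure.map (fun ω => ∑ i, X i ω) ℙ = gammaMeasure n r := by
    haveI : Nonempty (Fin n) := Fin.pos_iff_nonempty.mp hn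
    have := map_sum_gamma X hmeas hindep hr (fun i => hdist i) Finset.univ
      Finset.univ_nonempty
    simpa using this
  have hSmeas : Measurable (fun ω => ∑ i, X i ω) :=
    Finset.measurable_sum _ (fun i _ => hmeas i)
  -- inclusion of events
  have hsub : (fun ω => ∑ i, X i ω) ⁻¹' (Set.Ioo a b)
      ⊆ {ω | |(∑ i, X i ω) / n - μ| / μ < ε} := by
    intro ω hω
    obtain ⟨h1, h2⟩ := hω
    simp only [Set.mem_setOf_eq]
    rw [div_lt_iff₀ hμ, abs_lt]
    simp only at h1 h2
    rw [hadef, div_lt_iff₀ (by linarith)] at h1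
    rw [hbdef] at h2
    have h3 : μ - ε * μ < (∑ i, X i ω) / n := by
      rw [lt_div_iff₀ hn']
      nlinarith
    have h4 : (∑ i, X i ω) / n < μ + ε * μ := by
      rw [div_lt_iff₀ hn']
      nlinarith
    constructor <;> [linarith; linarith]
  have hmeasevent : ℙ ((fun ω => ∑ i, X i ω) ⁻¹' (Set.Ioo a b))
      = gammaMeasure n r (Set.Ioo a b) := by
    rw [← hmap, Measure.map_apply hSmeas measurableSet_Ioo]
  have hval : gammaMeasure n r (Set.Ioo a b)
      = ENNReal.ofReal (g n ((n : ℝ) * (1 + ε) / (1 + 2 * ε)) - g n ((n : ℝ) * (1 + ε))) := by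
    have e1 : r * a = (n : ℝ) * (1 + ε) / (1 + 2 * ε) := by
      rw [hrdef, hadef, hbdef]
      field_simp
    have e2 : r * b = (n : ℝ) * (1 + ε) := by
      rw [hrdef, hbdef]
      field_simp
    rw [gammaMeasure_Ioo n hn hr ha hab, e1, e2]
  have hle : ENNReal.ofReal (g n ((n : ℝ) * (1 + ε) / (1 + 2 * ε)) - g n ((n : ℝ) * (1 + ε)))
      ≤ ℙ {ω | |(∑ i, X i ω) / n - μ| / μ < ε} := by
    rw [← hval, ← hmeasevent]
    exact measure_mono hsub
  calc g n ((n : ℝ) * (1 + ε) / (1 + 2 * ε)) - g n ((n : ℝ) * (1 + ε))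
      ≤ (ENNReal.ofReal (g n ((n : ℝ) * (1 + ε) / (1 + 2 * ε)) - g n ((n : ℝ) * (1 + ε)))).toReal := by
        rw [ENNReal.toReal_ofReal']
        exact le_max_left _ _
    _ ≤ (ℙ {ω | |(∑ i, X i ω) / n - μ| / μ < ε}).toReal :=
        ENNReal.toReal_mono (measure_ne_top _ _) hle
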